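/- Fix integers t ≥ 2 and 0 < r < t with gcd(r, t) = 1, and fix an odd positive integer k. The family of functions n ↦ b_{k,ℓ}^{r,t}(n), indexed by odd integers ℓ > k and regarded as elements of the ℂ-vector space of functions from the positive integers to ℂ, is linearly independent over ℂ: every finite nontrivial ℂ-linear combination of distinct members of the family is a nonzero function. -/

import Mathlib

/-- The coefficient `b_{k,ℓ}^{r,t}(n)`. -/
def bFun (k l r t n : ℕ) : ℤ :=
  if n % t = r % t then
    ∑ d ∈ n.divisors, (((n : ℤ) ^ l + 1) * (d : ℤ) ^ k - ((n : ℤ) ^ k + 1) * (d : ℤ) ^ l)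
  else
    ∑ d ∈ n.divisors, ((n : ℤ) ^ l + 1) * (d : ℤ) ^ k

/-- For fixed `t, r` and fixed odd `k ≥ 1`, the coefficient functions
`n ↦ b_{k,ℓ}^{r,t}(n)`, indexed by odd `ℓ > k`, are linearly independent over `ℂ`. -/
theorem bFun_linearIndependent (t r k : ℕ) (ht : 2 ≤ t) (hr : 0 < r) (hrt : r < t)
    (hgcd : Nat.gcd r t = 1) (hk : Odd k) (hkpos : 0 < k) :
    LinearIndependent ℂ
      (fun l : {l : ℕ // Odd l ∧ k < l} => fun n : ℕ+ => (bFun k (l : ℕ) r t (n : ℕ) : ℂ)) := by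
  classical
  rw [linearIndependent_iff']
  intro s g hsum j hj
  have hT : 0 < t := by omega
  set P : Polynomial ℂ := ∑ i ∈ s, Polynomial.C (g i) * (Polynomial.X ^ (i : ℕ) + 1) with hP
  have hPeval : ∀ m : ℕ, P.eval ((((m + 1) * t : ℕ)) : ℂ) = 0 := by
    intro m
    set n : ℕ := (m + 1) * t with hn
    have hnpos : 0 < n := by positivity
    have key := congrFun hsum ⟨n, hnpos⟩
    erw [Finset.sum_apply] at key
    change ∑ i ∈ s, g i * (bFun k (i : ℕ) r t n : ℂ) = 0 at key
    have hmod : n % t = 0 := Nat.mul_mod_left _ _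
    have hrm : r % t = r := Nat.mod_eq_of_lt hrt
    have hcond : ¬ (n % t = r % t) := by rw [hmod, hrm]; omega
    have hbf : ∀ l : ℕ, bFun k l r t n
        = ((n : ℤ) ^ l + 1) * ∑ d ∈ n.divisors, (d : ℤ) ^ k := by
      intro l
      rw [bFun, if_neg hcond, Finset.mul_sum]
    set S : ℤ := ∑ d ∈ n.divisors, (d : ℤ) ^ k with hSdef
    have hS : (0 : ℤ) < S := by
      apply Finset.sum_pos
      · intro d hd
        have : 0 < d := Nat.pos_of_mem_divisors hd
        positivity
      · exact ⟨1, Nat.one_mem_divisors.mpr hnpos.ne'⟩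
    have hcoe : ((⟨n, hnpos⟩ : ℕ+) : ℕ) = n := rfl
    rw [show (0 : ℂ) = 0 from rfl] at key
    have key2 : (∑ i ∈ s, g i * (((n : ℂ)) ^ (i : ℕ) + 1)) * (S : ℂ) = 0 := by
      rw [Finset.sum_mul, ← key]
      apply Finset.sum_congr rfl
      intro i _
      show g i * ((n : ℂ) ^ (i : ℕ) + 1) * (S : ℂ)
          = g i * ((bFun k (i : ℕ) r t n : ℤ) : ℂ)
      rw [hbf]
      push_cast
      ring
    have hSne : (S : ℂ) ≠ 0 := by
      exact_mod_cast hS.ne'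
    have key3 : (∑ i ∈ s, g i * (((n : ℂ)) ^ (i : ℕ) + 1)) = 0 :=
      (mul_eq_zero.mp key2).resolve_right hSne
    rw [hP]
    simp only [Polynomial.eval_finset_sum, Polynomial.eval_mul, Polynomial.eval_C,
      Polynomial.eval_add, Polynomial.eval_pow, Polynomial.eval_X, Polynomial.eval_one]
    exact key3
  have hP0 : P = 0 := by
    apply Polynomial.eq_zero_of_infinite_isRoot
    apply Set.infinite_of_injective_forall_mem
      (f := fun m : ℕ => (((m + 1) * t : ℕ) : ℂ))
    · intro a b hab
      have hab' : (((a + 1) * t : ℕ) : ℂ) = (((b + 1) * t : ℕ) : ℂ) := hab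
      have h1 : ((a + 1) * t : ℕ) = ((b + 1) * t : ℕ) := by exact_mod_cast hab'
      have := Nat.eq_of_mul_eq_mul_right hT h1
      omega
    · intro m
      exact hPeval m
  have hjne : (j : ℕ) ≠ 0 := by
    have := j.2.2
    omega
  have hcoeff : P.coeff (j : ℕ) = g j := by
    rw [hP, Polynomial.finset_sum_coeff]
    rw [Finset.sum_eq_single j]
    · simp [Polynomial.coeff_X_pow, Polynomial.coeff_one, hjne]
    · intro i _ hij
      have hne : (i : ℕ) ≠ (j : ℕ) := fun h => hij (Subtype.ext h)
      simp [Polynomial.coeff_X_pow, Polynomial.coeff_one, hne, hne.symm, hjne]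
    · intro h
      exact absurd hj h
  rw [hP0] at hcoeff
  simpa using hcoeff.symm
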